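/- Let K be a Lie group, φ ∈ Aut(K), and define the twisted loop group C^∞(ℝ,K)_φ = { f ∈ C^∞(ℝ,K) : f(t+1) = φ^{-1}(f(t)) for all t }. Then the image of the evaluation homomorphism ev₀ : C^∞(ℝ,K)_φ → K, f ↦ f(0), is exactly the set K^{[φ]} = { k ∈ K : φ(k)k^{-1} ∈ K₀ }, where K₀ is the identity component of K. -/

import Mathlib

open scoped Manifold
open Set Metric

section Aux

variable {E : Type*} [NormedAddCommGroup E] [NormedSpace ℝ E]
  {H : Type*} [TopologicalSpace H] {I : ModelWithCorners ℝ E H}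
  {K : Type*} [TopologicalSpace K] [ChartedSpace H K] [Group K] [LieGroup I (⊤ : ℕ∞) K]

/-- The set of endpoints of "flat" smooth paths starting at `1`. -/
private def SmoothEnds (I : ModelWithCorners ℝ E H) (K : Type*) [TopologicalSpace K]
    [ChartedSpace H K] [Group K] : Set K :=
  {g : K | ∃ γ : ℝ → K, ContMDiff 𝓘(ℝ, ℝ) I (⊤ : ℕ∞) γ ∧ (∀ t ≤ (0:ℝ), γ t = 1) ∧
    ∀ t ≥ (1:ℝ), γ t = g}

private lemma one_mem_smoothEnds : (1 : K) ∈ SmoothEnds I K :=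
  ⟨fun _ => 1, contMDiff_const, fun _ _ => rfl, fun _ _ => rfl⟩

private lemma mul_mem_smoothEnds {g h : K} (hg : g ∈ SmoothEnds I K)
    (hh : h ∈ SmoothEnds I K) : g * h ∈ SmoothEnds I K := by
  obtain ⟨γ, hγ, hγ0, hγ1⟩ := hg
  obtain ⟨δ, hδ, hδ0, hδ1⟩ := hh
  exact ⟨fun t => γ t * δ t, hγ.mul hδ,
    fun t ht => by simp only [hγ0 t ht, hδ0 t ht, one_mul],
    fun t ht => by simp only [hγ1 t ht, hδ1 t ht]⟩

private lemma inv_mem_smoothEnds {g : K} (hg : g ∈ SmoothEnds I K) :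
    g⁻¹ ∈ SmoothEnds I K := by
  obtain ⟨γ, hγ, hγ0, hγ1⟩ := hg
  exact ⟨fun t => (γ t)⁻¹, hγ.inv,
    fun t ht => by simp only [hγ0 t ht, inv_one], fun t ht => by simp only [hγ1 t ht]⟩

/-- There is a neighborhood of `1` contained in `SmoothEnds`. -/
private lemma smoothEnds_nhds :
    ∃ N : Set K, IsOpen N ∧ (1 : K) ∈ N ∧ N ⊆ SmoothEnds I K := by
  obtain ⟨y₀, hy₀⟩ := interior_extChartAt_target_nonempty I (1 : K)
  set c := extChartAt I (1 : K) with hc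
  obtain ⟨ε, εpos, hball⟩ := Metric.isOpen_iff.1 isOpen_interior y₀ hy₀
  have hy₀t : y₀ ∈ c.target := interior_subset hy₀
  set p : K := c.symm y₀ with hp
  have hps : p ∈ c.source := c.map_target hy₀t
  have hcp : c p = y₀ := c.right_inv hy₀t
  set W : Set K := c.source ∩ c ⁻¹' (ball y₀ ε) with hW
  have hWopen : IsOpen W := isOpen_extChartAt_preimage' (1 : K) isOpen_ball
  have hpW : p ∈ W := ⟨hps, by simp [hcp, εpos, mem_ball_self]⟩
  -- a flat smooth path from `p` to any `q ∈ W`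
  have key : ∀ q ∈ W, ∃ γ : ℝ → K, ContMDiff 𝓘(ℝ, ℝ) I (⊤ : ℕ∞) γ ∧
      (∀ t ≤ (0:ℝ), γ t = p) ∧ ∀ t ≥ (1:ℝ), γ t = q := by
    intro q hq
    set u : ℝ → E := fun t => y₀ + Real.smoothTransition t • (c q - y₀) with hu
    have hu_smooth : ContMDiff 𝓘(ℝ, ℝ) 𝓘(ℝ, E) (⊤ : ℕ∞) u :=
      (contDiff_const.add (Real.smoothTransition.contDiff.smul contDiff_const)).contMDiff
    have humem : ∀ t, u t ∈ ball y₀ ε := by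
      intro t
      have h1 : dist (u t) y₀ = Real.smoothTransition t * ‖c q - y₀‖ := by
        simp [hu, dist_eq_norm, norm_smul, abs_of_nonneg (Real.smoothTransition.nonneg t)]
      have h2 : ‖c q - y₀‖ < ε := by
        have := hq.2
        rwa [Set.mem_preimage, mem_ball, dist_eq_norm] at this
      calc dist (u t) y₀ = Real.smoothTransition t * ‖c q - y₀‖ := h1
        _ ≤ 1 * ‖c q - y₀‖ :=
          mul_le_mul_of_nonneg_right (Real.smoothTransition.le_one t) (norm_nonneg _)
        _ = ‖c q - y₀‖ := one_mul _
        _ < ε := h2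
    have humem' : ∀ t, u t ∈ c.target := fun t =>
      interior_subset (hball (humem t))
    refine ⟨c.symm ∘ u, ?_, ?_, ?_⟩
    · exact (contMDiffOn_extChartAt_symm (1 : K)).comp_contMDiff hu_smooth humem'
    · intro t ht
      have : u t = y₀ := by simp [hu, Real.smoothTransition.zero_of_nonpos ht]
      simp [Function.comp, this, hp]
    · intro t ht
      have : u t = c q := by
        simp [hu, Real.smoothTransition.one_of_one_le ht]
      simp only [Function.comp, this]
      exact c.left_inv hq.1
  refine ⟨(fun x => x * p) ⁻¹' W,
    hWopen.preimage (contMDiff_mul_right (I := I) (a := p) (n := (⊤ : ℕ∞))).continuous, by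
    simpa using hpW, ?_⟩
  intro x hx
  obtain ⟨γ, hγ, h0, h1⟩ := key (x * p) hx
  exact ⟨fun t => γ t * p⁻¹, hγ.mul contMDiff_const,
    fun t ht => by simp only [h0 t ht, mul_inv_cancel],
    fun t ht => by simp only [h1 t ht, mul_inv_cancel_right]⟩

private lemma connectedComponent_subset_smoothEnds :
    connectedComponent (1 : K) ⊆ SmoothEnds I K := by
  obtain ⟨N, hNopen, hN1, hNsub⟩ := smoothEnds_nhds (I := I) (K := K)
  have hopen : IsOpen (SmoothEnds I K) := by
    rw [isOpen_iff_forall_mem_open]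
    intro g hg
    refine ⟨(fun x => g⁻¹ * x) ⁻¹' N, ?_,
      hNopen.preimage (contMDiff_mul_left (I := I) (a := g⁻¹) (n := (⊤ : ℕ∞))).continuous,
      by simpa using hN1⟩
    intro x hx
    have : x = g * (g⁻¹ * x) := by group
    rw [this]
    exact mul_mem_smoothEnds hg (hNsub hx)
  have hclosed : IsClosed (SmoothEnds I K) := by
    rw [← isOpen_compl_iff, isOpen_iff_forall_mem_open]
    intro g hg
    refine ⟨(fun x => g⁻¹ * x) ⁻¹' N, ?_,
      hNopen.preimage (contMDiff_mul_left (I := I) (a := g⁻¹) (n := (⊤ : ℕ∞))).continuous,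
      by simpa using hN1⟩
    intro x hx hxS
    apply hg
    have : g = x * (g⁻¹ * x)⁻¹ := by group
    rw [this]
    exact mul_mem_smoothEnds hxS (inv_mem_smoothEnds (hNsub hx))
  exact IsClopen.connectedComponent_subset ⟨hclosed, hopen⟩ one_mem_smoothEnds

end Aux

/- STATEMENT 5: For a Lie group K and φ ∈ Aut(K), the image of the evaluation morphism
ev₀ : C^∞(ℝ,K)_φ → K, f ↦ f(0), on the twisted loop group is exactly
K^{[φ]} = { k ∈ K : φ(k)k⁻¹ ∈ K₀ }. -/
theorem twisted_loop_group_evaluation_image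
    {E : Type*} [NormedAddCommGroup E] [NormedSpace ℝ E]
    {H : Type*} [TopologicalSpace H] (I : ModelWithCorners ℝ E H)
    {K : Type*} [TopologicalSpace K] [ChartedSpace H K] [Group K] [LieGroup I (⊤ : ℕ∞) K]
    (φ : K ≃* K)
    (hφ : ContMDiff I I (⊤ : ℕ∞) (φ : K → K))
    (hφ' : ContMDiff I I (⊤ : ℕ∞) (φ.symm : K → K)) :
    {k : K | ∃ f : ℝ → K, ContMDiff 𝓘(ℝ, ℝ) I (⊤ : ℕ∞) f ∧
        (∀ t : ℝ, f (t + 1) = φ.symm (f t)) ∧ f 0 = k}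
      = {k : K | φ k * k⁻¹ ∈ connectedComponent (1 : K)} := by
  ext k
  simp only [Set.mem_setOf_eq]
  constructor
  · rintro ⟨f, hf, htw, h0⟩
    -- `s ↦ f s * k⁻¹` is a continuous map with value `1` at `0` and `φ.symm k * k⁻¹` at `1`.
    have hF : ContMDiff 𝓘(ℝ, ℝ) I (⊤ : ℕ∞) (fun s => f s * k⁻¹) := hf.mul contMDiff_const
    have h1 : (1 : K) ∈ range (fun s => f s * k⁻¹) := ⟨0, by simp [h0]⟩
    have hmem : φ.symm k * k⁻¹ ∈ connectedComponent (1 : K) := by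
      have hr : range (fun s => f s * k⁻¹) ⊆ connectedComponent (1 : K) := by
        have := (isPreconnected_range hF.continuous).subset_connectedComponent h1
        exact this
      have : φ.symm k * k⁻¹ ∈ range (fun s => f s * k⁻¹) := by
        refine ⟨1, ?_⟩
        have := htw 0
        simp only [zero_add] at this
        show f 1 * k⁻¹ = φ.symm k * k⁻¹
        rw [this, h0]
      exact hr this
    -- push it through the continuous map `x ↦ (φ x)⁻¹`
    have hG : Continuous fun x : K => (φ x)⁻¹ := hφ.inv.continuous
    have := hG.image_connectedComponent_subset (1 : K)
    have h2 : (fun x : K => (φ x)⁻¹) (φ.symm k * k⁻¹) ∈ connectedComponent (1 : K) := by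
      have h3 := this ⟨_, hmem, rfl⟩
      simpa using h3
    have h4 : (fun x : K => (φ x)⁻¹) (φ.symm k * k⁻¹) = φ k * k⁻¹ := by
      simp [mul_inv_rev]
    rwa [h4] at h2
  · intro hk
    -- `h := φ.symm k * k⁻¹` lies in the identity component
    have hG : Continuous fun x : K => (φ.symm x)⁻¹ := hφ'.inv.continuous
    have hmem : φ.symm k * k⁻¹ ∈ connectedComponent (1 : K) := by
      have h3 := hG.image_connectedComponent_subset (1 : K) ⟨_, hk, rfl⟩
      simp only [map_mul, map_inv, MulEquiv.symm_apply_apply, mul_inv_rev, inv_inv,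
        inv_one, map_one] at h3
      exact h3
    obtain ⟨γ, hγ, hγ0, hγ1⟩ := connectedComponent_subset_smoothEnds (I := I) hmem
    -- θ : flat path from k to φ.symm k, constant near the endpoints
    set θ : ℝ → K := fun x => γ (2 * x - 2⁻¹) * k with hθ
    have hθ_smooth : ContMDiff 𝓘(ℝ, ℝ) I (⊤ : ℕ∞) θ :=
      ((hγ.comp ((contDiff_const.mul contDiff_id).sub contDiff_const).contMDiff).mul
        contMDiff_const)
    have hθ0 : ∀ x ≤ (4⁻¹ : ℝ), θ x = k := by
      intro x hx
      have : (2:ℝ) * x - 2⁻¹ ≤ 0 := by nlinarith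
      simp [hθ, hγ0 _ this]
    have hθ1 : ∀ x ≥ (3/4 : ℝ), θ x = φ.symm k := by
      intro x hx
      have : (1:ℝ) ≤ 2 * x - 2⁻¹ := by nlinarith
      simp [hθ, hγ1 _ this, inv_mul_cancel_right]
    -- the automorphism `σ = φ.symm` as an element of `MulAut K`, and its powers
    set σ : MulAut K := (φ.symm : K ≃* K) with hσ
    have hσ_apply : ∀ x : K, σ x = φ.symm x := fun _ => rfl
    have hσinv_apply : ∀ x : K, σ⁻¹ x = φ x := fun _ => rfl
    have hσ_smooth : ∀ n : ℤ, ContMDiff I I (⊤ : ℕ∞) ((σ ^ n : MulAut K) : K → K) := by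
      intro n
      induction n using Int.induction_on with
      | zero =>
        have : ((σ ^ (0 : ℤ) : MulAut K) : K → K) = id := by
          funext x
          rw [zpow_zero, MulAut.one_apply, id_eq]
        rw [this]
        exact contMDiff_id
      | succ m ih =>
        have : ((σ ^ ((m : ℤ) + 1) : MulAut K) : K → K)
            = fun x => (σ ^ (m : ℤ) : MulAut K) (σ x) := by
          funext x
          rw [zpow_add_one, MulAut.mul_apply]
        rw [this]
        exact ih.comp hφ'
      | pred m ih =>
        have : ((σ ^ (-(m : ℤ) - 1) : MulAut K) : K → K)
            = fun x => (σ ^ (-(m : ℤ)) : MulAut K) (σ⁻¹ x) := by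
          funext x
          rw [zpow_sub_one, MulAut.mul_apply]
        rw [this]
        exact ih.comp hφ
    have hR1 : ∀ (m : ℤ) (x : K), (σ ^ (m + 1) : MulAut K) x = σ ((σ ^ m : MulAut K) x) := by
      intro m x
      rw [add_comm, zpow_add, zpow_one, MulAut.mul_apply]
    have hR2 : ∀ (m : ℤ) (x : K), (σ ^ m : MulAut K) (σ x) = (σ ^ (m + 1) : MulAut K) x := by
      intro m x
      rw [zpow_add_one, MulAut.mul_apply]
    -- the twisted periodic extension
    refine ⟨fun t => (σ ^ ⌊t⌋ : MulAut K) (θ (t - ⌊t⌋)), ?_, ?_, ?_⟩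
    · -- smoothness
      intro t
      set n : ℤ := ⌊t⌋ with hn
      by_cases ht : (n : ℝ) < t
      · -- interior of the interval
        have ht' : t < (n : ℝ) + 1 := Int.lt_floor_add_one t
        have hg : ContMDiff 𝓘(ℝ, ℝ) I (⊤ : ℕ∞) fun s => (σ ^ n : MulAut K) (θ (s - (n : ℝ))) :=
          (hσ_smooth n).comp (hθ_smooth.comp (contDiff_id.sub contDiff_const).contMDiff)
        refine (hg t).congr_of_eventuallyEq ?_
        have hmem : Set.Ioo ((n : ℝ)) ((n : ℝ) + 1) ∈ nhds t := Ioo_mem_nhds ht ht'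
        filter_upwards [hmem] with s hs
        beta_reduce
        have hfloor : ⌊s⌋ = n := by
          rw [Int.floor_eq_iff]
          exact ⟨hs.1.le, by exact_mod_cast hs.2⟩
        rw [hfloor]
      · -- `t` is an integer; `f` is locally constant there
        have htn : t = (n : ℝ) := le_antisymm (not_lt.1 ht) (Int.floor_le t)
        refine (contMDiff_const (c := (σ ^ n : MulAut K) k) t).congr_of_eventuallyEq ?_
        have hmem : Set.Ioo ((n : ℝ) - 4⁻¹) ((n : ℝ) + 4⁻¹) ∈ nhds t := by
          apply Ioo_mem_nhds <;> rw [htn] <;> norm_num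
        filter_upwards [hmem] with s hs
        beta_reduce
        by_cases hsn : (n : ℝ) ≤ s
        · have hfloor : ⌊s⌋ = n := by
            rw [Int.floor_eq_iff]
            constructor
            · exact hsn
            · have := hs.2
              linarith
          rw [hfloor, hθ0 (s - (n : ℝ)) (by linarith [hs.2])]
        · push_neg at hsn
          have hfloor : ⌊s⌋ = n - 1 := by
            rw [Int.floor_eq_iff]
            push_cast
            constructor
            · linarith [hs.1]
            · linarith
          rw [hfloor]
          have harg : s - ((n : ℝ) - 1) ≥ 3/4 := by
            push_cast
            linarith [hs.1]
          have : s - ((n - 1 : ℤ) : ℝ) = s - ((n : ℝ) - 1) := by push_cast; ring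
          rw [this, hθ1 _ harg, ← hσ_apply, hR2, sub_add_cancel]
    · -- the twist property
      intro t
      beta_reduce
      have hfl : ⌊t + 1⌋ = ⌊t⌋ + 1 := Int.floor_add_one t
      rw [hfl]
      have : t + 1 - ((⌊t⌋ + 1 : ℤ) : ℝ) = t - (⌊t⌋ : ℝ) := by push_cast; ring
      rw [this, hR1]
    · -- value at 0
      beta_reduce
      have h00 : ⌊(0 : ℝ)⌋ = 0 := Int.floor_zero
      rw [h00]
      simp only [Int.cast_zero, sub_zero, zpow_zero]
      have : θ 0 = k := hθ0 0 (by norm_num)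
      simpa using this
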